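/- Let 𝔪 be a Lie algebra of vector fields on R^n containing all ∂_{x^i}, and let D be a derivation of 𝔪 with D(∂_u) = Σ_v F_u^v ∂_v where the functions F_u^v are polynomials. Then there exists a vector field Z = Σ_w F^w ∂_w with polynomial coefficients such that D(∂_u) = [Z, ∂_u] for all u. -/

import Mathlib

open MvPolynomial

/-- Polynomial vector fields on ℝⁿ, given by their coefficient polynomials. -/
abbrev VF (n : ℕ) := Fin n → MvPolynomial (Fin n) ℝ

/-- Lie bracket of polynomial vector fields. -/
noncomputable def bracket {n : ℕ} (V W : VF n) : VF n :=
  fun i => ∑ j, (V j * pderiv j (W i) - W j * pderiv j (V i))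

/-- The weight (Euler) vector field ∇ʰ = Σᵢ rᵢ xⁱ ∂ᵢ of the dilation with weights r. -/
noncomputable def nabla {n : ℕ} (r : Fin n → ℕ) : VF n :=
  fun i => (r i : MvPolynomial (Fin n) ℝ) * X i

/-- A polynomial vector field is homogeneous of weight `a` w.r.t. the dilation `r`. -/
def IsHomog {n : ℕ} (r : Fin n → ℕ) (a : ℤ) (V : VF n) : Prop :=
  bracket (nabla r) V = fun i => (a : ℝ) • V i

/-- The coordinate vector field ∂ᵢ. -/
noncomputable def coordVF {n : ℕ} (i : Fin n) : VF n := fun k => if k = i then 1 else 0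

/-- The vector field f ∂ⱼ. -/
noncomputable def vfOf {n : ℕ} (f : MvPolynomial (Fin n) ℝ) (j : Fin n) : VF n :=
  fun k => if k = j then f else 0

/-- 𝔪 = g₋(h): the span of homogeneous polynomial vector fields of negative weight. -/
noncomputable def negPart {n : ℕ} (r : Fin n → ℕ) : Submodule ℝ (VF n) :=
  Submodule.span ℝ {V : VF n | ∃ k : ℤ, k < 0 ∧ IsHomog r k V}

/- ### Auxiliary lemmas: antiderivatives of polynomials and primitives of closed 1-forms -/

/-- The antiderivative in the variable `xⱼ` (monomials get divided by the new exponent). -/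
noncomputable def antid {n : ℕ} (j : Fin n) :
    MvPolynomial (Fin n) ℝ →ₗ[ℝ] MvPolynomial (Fin n) ℝ :=
  Finsupp.lsum ℝ (fun m : (Fin n →₀ ℕ) =>
    LinearMap.toSpanSingleton ℝ (MvPolynomial (Fin n) ℝ)
      (monomial (m + Finsupp.single j 1) (((m j : ℝ) + 1)⁻¹))) ∘ₗ
    (AddMonoidAlgebra.coeffLinearEquiv ℝ).toLinearMap

lemma antid_monomial {n : ℕ} (j : Fin n) (m : Fin n →₀ ℕ) (a : ℝ) :
    antid j (monomial m a) = monomial (m + Finsupp.single j 1) (a * ((m j : ℝ) + 1)⁻¹) := by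
  rw [antid, LinearMap.comp_apply, ← single_eq_monomial]
  erw [Finsupp.lsum_single]
  rw [LinearMap.toSpanSingleton_apply, ← single_eq_monomial, AddMonoidAlgebra.smul_single, smul_eq_mul,
    single_eq_monomial]

lemma pderiv_antid_self {n : ℕ} (j : Fin n) (p : MvPolynomial (Fin n) ℝ) :
    pderiv j (antid j p) = p := by
  induction p using MvPolynomial.induction_on' with
  | monomial m a =>
    rw [antid_monomial, pderiv_monomial]
    have h1 : (m + Finsupp.single j 1) - Finsupp.single j 1 = m := by
      ext k; simp [Finsupp.single_apply]
    rw [h1]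
    congr 1
    simp only [Finsupp.add_apply, Finsupp.single_eq_same]
    push_cast
    have : ((m j : ℝ) + 1) ≠ 0 := by positivity
    field_simp
  | add p q hp hq => simp [map_add, hp, hq]

lemma pderiv_antid_ne {n : ℕ} {i j : Fin n} (h : i ≠ j) (p : MvPolynomial (Fin n) ℝ) :
    pderiv i (antid j p) = antid j (pderiv i p) := by
  induction p using MvPolynomial.induction_on' with
  | monomial m a =>
    rw [antid_monomial, pderiv_monomial, pderiv_monomial, antid_monomial]
    have h1 : (m + Finsupp.single j 1) - Finsupp.single i 1
        = (m - Finsupp.single i 1) + Finsupp.single j 1 := by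
      ext k
      simp only [Finsupp.add_apply, Finsupp.tsub_apply, Finsupp.single_apply]
      by_cases h1 : i = k <;> by_cases h2 : j = k
      · exact absurd (h1.trans h2.symm) h
      · simp [h1, h2]
      · simp [h1, h2]
      · simp [h1, h2]
    rw [h1]
    congr 1
    simp only [Finsupp.add_apply, Finsupp.tsub_apply, Finsupp.single_apply]
    simp only [if_neg h, if_neg (Ne.symm h), Nat.add_zero, Nat.sub_zero]
    ring
  | add p q hp hq => simp [map_add, hp, hq]

lemma pderiv_pderiv_comm {n : ℕ} (i j : Fin n) (p : MvPolynomial (Fin n) ℝ) :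
    pderiv i (pderiv j p) = pderiv j (pderiv i p) := by
  rcases eq_or_ne i j with rfl | hij
  · rfl
  induction p using MvPolynomial.induction_on' with
  | monomial m a =>
    rw [pderiv_monomial, pderiv_monomial, pderiv_monomial, pderiv_monomial]
    have h1 : (m - Finsupp.single j 1) - Finsupp.single i 1
        = (m - Finsupp.single i 1) - Finsupp.single j 1 := by
      ext k
      simp only [Finsupp.tsub_apply, Finsupp.single_apply]
      omega
    rw [h1]
    congr 1
    simp only [Finsupp.tsub_apply, Finsupp.single_apply]
    simp only [if_neg hij, if_neg (Ne.symm hij), Nat.sub_zero]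
    ring
  | add p q hp hq => simp [map_add, hp, hq]

/-- Iterated primitive of a closed 1-form: after step `k`, `pderiv j P = F j` for `j < k`. -/
noncomputable def prim {n : ℕ} (F : Fin n → MvPolynomial (Fin n) ℝ) : ℕ → MvPolynomial (Fin n) ℝ
  | 0 => 0
  | k + 1 => if h : k < n then
      prim F k + antid ⟨k, h⟩ (F ⟨k, h⟩ - pderiv ⟨k, h⟩ (prim F k))
    else prim F k

lemma prim_spec {n : ℕ} (F : Fin n → MvPolynomial (Fin n) ℝ)
    (hcl : ∀ u s, pderiv s (F u) = pderiv u (F s)) :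
    ∀ k, ∀ j : Fin n, (j : ℕ) < k → pderiv j (prim F k) = F j := by
  intro k
  induction k with
  | zero => intro j hj; omega
  | succ k ih =>
    intro j hj
    rw [prim]
    by_cases hk : k < n
    · rw [dif_pos hk]
      rcases eq_or_ne j ⟨k, hk⟩ with rfl | hne
      · rw [map_add, pderiv_antid_self]
        ring
      · have hjk : (j : ℕ) < k := by
          have : (j : ℕ) ≠ k := fun hh => hne (Fin.ext hh)
          omega
        rw [map_add, pderiv_antid_ne hne, map_sub, pderiv_pderiv_comm, ih j hjk, hcl j, map_sub]
        simp
    · rw [dif_neg hk]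
      exact ih j (by omega)

lemma bracket_coord_right {n : ℕ} (V : VF n) (u i : Fin n) :
    bracket V (coordVF u) i = - pderiv u (V i) := by
  unfold bracket coordVF
  have h : ∀ j : Fin n, V j * pderiv j (if i = u then 1 else 0)
      - (if j = u then (1 : MvPolynomial (Fin n) ℝ) else 0) * pderiv j (V i)
      = - (if j = u then pderiv j (V i) else 0) := by
    intro j
    by_cases hiu : i = u <;> by_cases hju : j = u <;> simp [hiu, hju]
  rw [Finset.sum_congr rfl fun j _ => h j]
  simp

lemma bracket_coord_left {n : ℕ} (W : VF n) (u i : Fin n) :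
    bracket (coordVF u) W i = pderiv u (W i) := by
  unfold bracket coordVF
  have h : ∀ j : Fin n, (if j = u then (1 : MvPolynomial (Fin n) ℝ) else 0) * pderiv j (W i)
      - W j * pderiv j (if i = u then 1 else 0)
      = (if j = u then pderiv j (W i) else 0) := by
    intro j
    by_cases hiu : i = u <;> by_cases hju : j = u <;> simp [hiu, hju]
  rw [Finset.sum_congr rfl fun j _ => h j]
  simp

lemma bracket_coord_coord {n : ℕ} (u s : Fin n) :
    bracket (coordVF u) (coordVF s) = 0 := by
  funext i
  rw [bracket_coord_left]
  unfold coordVF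
  split_ifs <;> simp

/-- If `𝔪` is a Lie algebra of polynomial vector fields on ℝⁿ
containing all the coordinate fields `∂ᵤ`, and `D` is a derivation of `𝔪` (with
polynomial coefficient functions `Fᵤᵛ`, automatic here), then there is a polynomial
vector field `Z` with `D(∂ᵤ) = [Z, ∂ᵤ]` for all `u`. -/
theorem derivation_on_coords_is_inner
    (n : ℕ) (M : Set (VF n))
    (hMcoord : ∀ u, coordVF u ∈ M)
    (hMclosed : ∀ V ∈ M, ∀ W ∈ M, bracket V W ∈ M)
    (D : VF n → VF n)
    (hLeib : ∀ V ∈ M, ∀ W ∈ M,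
      D (bracket V W) = bracket (D V) W + bracket V (D W)) :
    ∃ Z : VF n, ∀ u, D (coordVF u) = bracket Z (coordVF u) := by
  set F : Fin n → VF n := fun u => D (coordVF u) with hF
  have hcl : ∀ i : Fin n, ∀ u s : Fin n, pderiv s (F u i) = pderiv u (F s i) := by
    intro i u s
    have E2 := hLeib _ (hMcoord u) _ (hMcoord u)
    have E1 := hLeib _ (hMcoord u) _ (hMcoord s)
    rw [bracket_coord_coord] at E1 E2
    have hD0 : D 0 i = 0 := by
      have := congrFun E2 i
      simp only [Pi.add_apply] at this
      rw [bracket_coord_right, bracket_coord_left] at this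
      simpa using this
    have := congrFun E1 i
    simp only [Pi.add_apply] at this
    rw [bracket_coord_right, bracket_coord_left] at this
    rw [hD0] at this
    linear_combination this
  refine ⟨fun i => - prim (fun u => F u i) n, fun u => ?_⟩
  funext i
  rw [bracket_coord_right]
  rw [map_neg, neg_neg, prim_spec (fun u => F u i) (hcl i) n u u.isLt]
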